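/- arXiv:0809.5068 — 4 statements merged into one kernel-verified Lean document; each statement's English description precedes it below -/
import Mathlib

section
/- Let A be an m × m invertible real matrix such that the unique solution v₀ of A v = 𝟙_m has all entries positive. Let U = cA + d·J with c, d > 0 and J the all-ones m×m matrix, and let β < 0. Then there exists a unique solution v of U v = -2β 𝟙_m, it is a positive scalar multiple of v₀, and it has all entries positive. -/
/-- If `A` is invertible with positive solution `v₀` of `A v = 𝟙`, and
`U = cA + dJ` with `c,d > 0`, `β < 0`, then `U v = -2β 𝟙` has a unique
solution, which is a positive multiple of `v₀` and has positive entries. -/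
theorem stmt6 {m : ℕ} (A : Matrix (Fin m) (Fin m) ℝ) (hA : IsUnit A)
    (v₀ : Fin m → ℝ) (hv₀ : A.mulVec v₀ = fun _ => (1:ℝ))
    (hv₀pos : ∀ i, 0 < v₀ i)
    (c d : ℝ) (hc : 0 < c) (hd : 0 < d)
    (J : Matrix (Fin m) (Fin m) ℝ) (hJ : ∀ i j, J i j = 1)
    (U : Matrix (Fin m) (Fin m) ℝ) (hU : U = c • A + d • J)
    (β : ℝ) (hβ : β < 0) :
    (∃! v : Fin m → ℝ, U.mulVec v = fun _ => -2 * β) ∧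
      ∀ v : Fin m → ℝ, (U.mulVec v = fun _ => -2 * β) →
        (∃ t : ℝ, 0 < t ∧ v = t • v₀) ∧ ∀ i, 0 < v i := by
  have hAinj : Function.Injective A.mulVec := Matrix.mulVec_injective_iff_isUnit.2 hA
  set S : ℝ := ∑ i, v₀ i with hS
  have hS0 : 0 ≤ S := Finset.sum_nonneg fun i _ => (hv₀pos i).le
  have hcd : 0 < c + d * S := by positivity
  have hJmul : ∀ u : Fin m → ℝ, J.mulVec u = fun _ => ∑ i, u i := by
    intro u
    funext j
    simp [Matrix.mulVec, dotProduct, hJ]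
  have hUmul : ∀ u : Fin m → ℝ,
      U.mulVec u = c • A.mulVec u + (d * ∑ i, u i) • (fun _ => (1:ℝ)) := by
    intro u
    rw [hU, Matrix.add_mulVec, Matrix.smul_mulVec, Matrix.smul_mulVec, hJmul u]
    funext j
    simp [mul_comm]
  -- U v₀ = (c + d*S) • 𝟙
  have hUv₀ : U.mulVec v₀ = fun _ => c + d * S := by
    rw [hUmul, hv₀]
    funext j; simp [hS]
  set t : ℝ := (-2 * β) / (c + d * S) with ht
  have htpos : 0 < t := by
    apply div_pos (by linarith) hcd
  have hsol : U.mulVec (t • v₀) = fun _ => -2 * β := by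
    rw [Matrix.mulVec_smul, hUv₀]
    funext j
    simp only [Pi.smul_apply, smul_eq_mul]
    rw [ht]
    field_simp [hcd.ne']
  have hker : ∀ u : Fin m → ℝ, U.mulVec u = 0 → u = 0 := by
    intro u hu
    rw [hUmul] at hu
    set Su : ℝ := ∑ i, u i with hSu
    have h1 : A.mulVec u = A.mulVec ((-(d * Su) / c) • v₀) := by
      rw [Matrix.mulVec_smul, hv₀]
      funext j
      have := congrFun hu j
      simp only [Pi.add_apply, Pi.smul_apply, smul_eq_mul, Pi.zero_apply] at this ⊢
      field_simp
      linarith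
    have h2 : u = (-(d * Su) / c) • v₀ := hAinj h1
    have h3 : Su = (-(d * Su) / c) * S := by
      rw [hSu]
      conv_lhs => rw [h2]
      simp only [Pi.smul_apply, smul_eq_mul]
      rw [← Finset.mul_sum]
    have h4 : Su * (c + d * S) = 0 := by
      field_simp at h3
      linarith [h3]
    have h5 : Su = 0 := by
      rcases mul_eq_zero.1 h4 with h | h
      · exact h
      · exact absurd h hcd.ne'
    rw [h2, h5]
    simp
  have huniq : ∀ v : Fin m → ℝ, U.mulVec v = (fun _ => -2 * β) → v = t • v₀ := by
    intro v hv
    have : U.mulVec (v - t • v₀) = 0 := by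
      rw [Matrix.mulVec_sub, hv, hsol]; simp
    have := hker _ this
    have := sub_eq_zero.1 this
    exact this
  constructor
  · exact ⟨t • v₀, hsol, huniq⟩
  · intro v hv
    have hvt := huniq v hv
    refine ⟨⟨t, htpos, hvt⟩, fun i => ?_⟩
    rw [hvt]
    simpa using mul_pos htpos (hv₀pos i)
end

section
/- Let (𝔫, ⟨·,·⟩) be a finite-dimensional metric skew algebra with orthonormal basis ℬ = {X_i}, structure constants α_{ij}^k = ⟨[X_i,X_j], X_k⟩, and suppose ℬ consists of eigenvectors of the nil-Ricci endomorphism with eigenvalues κ_1, ..., κ_n. Then the vector (κ_1, ..., κ_n)^T equals -½ Σ_{(i,j,k): i<j, α_{ij}^k ≠ 0} (α_{ij}^k)² · Y_{ij}^k, where Y_{ij}^k = e_i + e_j - e_k. -/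
open scoped RealInnerProductSpace

/-- The root vector `Y_{ij}^k = e_i + e_j - e_k` in `ℝ^n`. -/
def rootVec {n : ℕ} (i j k : Fin n) : Fin n → ℝ :=
  fun l => (if l = i then (1:ℝ) else 0) + (if l = j then (1:ℝ) else 0)
    - (if l = k then (1:ℝ) else 0)

lemma key_sum {n : ℕ} (F : Fin n → Fin n → Fin n → ℝ)
    (hsym : ∀ i j l, F j i l = F i j l) (hdiag : ∀ i l, F i i l = 0) (k : Fin n) :
    ∑ i, ∑ j, ∑ l, (if i < j then F i j l else 0) *
      ((if k = i then (1:ℝ) else 0) + (if k = j then 1 else 0) - (if k = l then 1 else 0))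
    = (∑ j, ∑ l, F k j l) - (1/2) * ∑ i, ∑ j, F i j k := by
  classical
  have expand : ∀ i j l : Fin n, (if i < j then F i j l else 0) *
      ((if k = i then (1:ℝ) else 0) + (if k = j then 1 else 0) - (if k = l then 1 else 0))
      = (if k = i then (if i < j then F i j l else 0) else 0)
        + (if k = j then (if i < j then F i j l else 0) else 0)
        - (if k = l then (if i < j then F i j l else 0) else 0) := by
    intro i j l
    split_ifs <;> ring
  simp only [expand, Finset.sum_sub_distrib, Finset.sum_add_distrib]
  -- piece 1
  have p1 : (∑ i, ∑ j, ∑ l, (if k = i then (if i < j then F i j l else 0) else 0))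
      = ∑ j, ∑ l, (if k < j then F k j l else 0) := by
    rw [Finset.sum_eq_single k]
    · simp
    · intro i _ hik
      have : k ≠ i := fun h => hik h.symm
      simp [this]
    · intro h; exact absurd (Finset.mem_univ k) h
  -- piece 2
  have p2 : (∑ i, ∑ j, ∑ l, (if k = j then (if i < j then F i j l else 0) else 0))
      = ∑ j, ∑ l, (if j < k then F k j l else 0) := by
    rw [Finset.sum_comm]
    rw [Finset.sum_eq_single k]
    · refine Finset.sum_congr rfl fun i _ => Finset.sum_congr rfl fun l _ => ?_
      by_cases h : i < k <;> simp [h, hsym]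
    · intro j _ hjk
      have : k ≠ j := fun h => hjk h.symm
      simp [this]
    · intro h; exact absurd (Finset.mem_univ k) h
  -- piece 3
  have p3 : (∑ i, ∑ j, ∑ l, (if k = l then (if i < j then F i j l else 0) else 0))
      = (1/2) * ∑ i, ∑ j, F i j k := by
    have e1 : ∀ i j : Fin n, (∑ l, (if k = l then (if i < j then F i j l else 0) else 0))
        = (if i < j then F i j k else 0) := by
      intro i j
      rw [Finset.sum_eq_single k]
      · simp
      · intro l _ hlk
        have : k ≠ l := fun h => hlk h.symm
        simp [this]
      · intro h; exact absurd (Finset.mem_univ k) h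
    simp only [e1]
    have e2 : (∑ i, ∑ j, F i j k)
        = (∑ i, ∑ j, (if i < j then F i j k else 0))
          + ∑ i, ∑ j, (if j < i then F i j k else 0) := by
      rw [← Finset.sum_add_distrib]
      refine Finset.sum_congr rfl fun i _ => ?_
      rw [← Finset.sum_add_distrib]
      refine Finset.sum_congr rfl fun j _ => ?_
      rcases lt_trichotomy i j with h | h | h
      · simp [h, not_lt_of_gt h]
      · subst h; simp [hdiag]
      · simp [h, not_lt_of_gt h]
    have e3 : (∑ i, ∑ j, (if j < i then F i j k else 0))
        = ∑ i, ∑ j, (if i < j then F i j k else 0) := by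
      rw [Finset.sum_comm]
      refine Finset.sum_congr rfl fun i _ => Finset.sum_congr rfl fun j _ => ?_
      by_cases h : i < j <;> simp [h, hsym]
    rw [e2, e3]; ring
  rw [p1, p2, p3, ← Finset.sum_add_distrib]
  have : (∑ j, ((∑ l, (if k < j then F k j l else 0)) + ∑ l, (if j < k then F k j l else 0)))
      = ∑ j, ∑ l, F k j l := by
    refine Finset.sum_congr rfl fun j _ => ?_
    rw [← Finset.sum_add_distrib]
    refine Finset.sum_congr rfl fun l _ => ?_
    rcases lt_trichotomy k j with h | h | h
    · simp [h, not_lt_of_gt h]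
    · subst h; simp [hdiag]
    · simp [h, not_lt_of_gt h]
  rw [this]

open Classical in
/-- The Ricci eigenvalue vector is `-½ Σ (α_{ij}^k)² Y_{ij}^k`, summed over
nonzero structure constants with `i < j`. -/
theorem stmt12 {L : Type*} [NormedAddCommGroup L] [InnerProductSpace ℝ L]
    [FiniteDimensional ℝ L] {n : ℕ}
    (lb : L →ₗ[ℝ] L →ₗ[ℝ] L)
    (hskew : ∀ x y, lb x y = - lb y x)
    (b : Module.Basis (Fin n) ℝ L) (hb : Orthonormal ℝ ⇑b)
    (α : Fin n → Fin n → Fin n → ℝ)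
    (hα : ∀ i j k, α i j k = ⟪lb (b i) (b j), b k⟫)
    (ric : L → L → ℝ)
    (hric : ∀ X Y, ric X Y =
      -(1/2) * ∑ i, ⟪lb X (b i), lb Y (b i)⟫
      + (1/4) * ∑ i, ∑ j, ⟪lb (b i) (b j), X⟫ * ⟪lb (b i) (b j), Y⟫)
    (κ : Fin n → ℝ)
    (heig : ∀ i j, ric (b i) (b j) = if i = j then κ i else 0) :
    ∀ k : Fin n, κ k =
      -(1/2) * ∑ i, ∑ j, ∑ l,
        (if i < j ∧ α i j l ≠ 0 then (α i j l)^2 * rootVec i j l k else 0) := by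
  intro k
  -- basic algebraic facts
  have hzero : ∀ x, lb x x = 0 := by
    intro x
    have h := hskew x x
    have h1 : lb x x + lb x x = 0 := by nth_rewrite 2 [h]; simp
    have h2 : (2:ℝ) • lb x x = 0 := by rw [two_smul]; exact h1
    simpa using h2
  have hdiag : ∀ i l, α i i l = 0 := by
    intro i l; rw [hα, hzero]; simp
  have hsym : ∀ i j l, (α j i l)^2 = (α i j l)^2 := by
    intro i j l
    rw [hα, hα, hskew, inner_neg_left]
    ring
  -- Parseval
  set ob : OrthonormalBasis (Fin n) ℝ L := b.toOrthonormalBasis hb with hob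
  have hcoe : ∀ i, ob i = b i := fun i => congrFun (b.coe_toOrthonormalBasis hb) i
  have hpars : ∀ i, ⟪lb (b k) (b i), lb (b k) (b i)⟫ = ∑ l, (α k i l)^2 := by
    intro i
    have h := ob.sum_inner_mul_inner (lb (b k) (b i)) (lb (b k) (b i))
    rw [← h]
    refine Finset.sum_congr rfl fun l _ => ?_
    rw [hcoe, hα, real_inner_comm (b l)]
    ring
  -- compute κ k
  have hκ : κ k = ric (b k) (b k) := by rw [heig]; simp
  rw [hκ, hric]
  simp only [hpars]
  have hinner : ∀ i j, ⟪lb (b i) (b j), b k⟫ * ⟪lb (b i) (b j), b k⟫ = (α i j k)^2 := by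
    intro i j; rw [← hα]; ring
  simp only [hinner]
  -- rewrite RHS summand
  have hterm : ∀ i j l : Fin n,
      (if i < j ∧ α i j l ≠ 0 then (α i j l)^2 * rootVec i j l k else 0)
      = (if i < j then (α i j l)^2 else 0) *
        ((if k = i then (1:ℝ) else 0) + (if k = j then 1 else 0) - (if k = l then 1 else 0)) := by
    intro i j l
    by_cases hlt : i < j
    · by_cases hne : α i j l = 0
      · simp [hlt, hne, rootVec]
      · simp [hlt, hne, rootVec]
    · simp [hlt]
  simp only [hterm]
  rw [key_sum (fun i j l => (α i j l)^2) (fun i j l => hsym i j l) (fun i l => by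
    simp [hdiag]) k]
  ring
end

section
/- Let (𝔫, Q) be a metric skew algebra with orthonormal basis ℬ of eigenvectors for the nil-Ricci endomorphism, with Ricci eigenvalue vector Ric ∈ ℝ^n and structure vector [α²] ∈ ℝ^m listing the squares (α_{ij}^k)² over the set Λ of triples (i,j,k) with i < j and α_{ij}^k ≠ 0. Let Y be the m × n root matrix and U = Y Y^T. Then the endomorphism D = Ric - β·Id is a derivation of 𝔫 if and only if U [α²] = -2β 𝟙_m. -/
open scoped RealInnerProductSpace

/-- Symmetrization: a sum of a symmetric function with zero diagonal over
`i < j` is half the full sum. -/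
lemma sym_half_aux {n : ℕ} (G : Fin n → Fin n → ℝ) (hsym : ∀ i j, G i j = G j i)
    (hdiag : ∀ i, G i i = 0) :
    ∑ i, ∑ j, (if i < j then G i j else 0) = (1/2) * ∑ i, ∑ j, G i j := by
  have split : ∀ i j : Fin n, G i j =
      (if i < j then G i j else 0) + (if j < i then G i j else 0) := by
    intro i j
    rcases lt_trichotomy i j with h | h | h
    · simp [h, not_lt_of_gt h]
    · simp [h, hdiag]
    · simp [h, not_lt_of_gt h]
  have h2 : ∑ i, ∑ j, G i j
      = (∑ i, ∑ j, (if i < j then G i j else 0))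
        + ∑ i, ∑ j, (if j < i then G i j else 0) := by
    rw [← Finset.sum_add_distrib]
    apply Finset.sum_congr rfl; intro i _
    rw [← Finset.sum_add_distrib]
    exact Finset.sum_congr rfl fun j _ => split i j
  have h3 : ∑ i, ∑ j, (if j < i then G i j else 0)
      = ∑ i, ∑ j, (if i < j then G i j else 0) := by
    rw [Finset.sum_comm]
    apply Finset.sum_congr rfl; intro i _
    exact Finset.sum_congr rfl fun j _ => by rw [hsym j i]
  linarith [h2, h3]

/-- A metric skew algebra with Ricci eigenvector basis satisfies the nilsoliton
condition (`D = Ric - β Id` is a derivation) iff `U [α²] = -2β 𝟙`. -/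
theorem stmt16 {L : Type*} [NormedAddCommGroup L] [InnerProductSpace ℝ L]
    [FiniteDimensional ℝ L] {n m : ℕ}
    (lb : L →ₗ[ℝ] L →ₗ[ℝ] L)
    (hskew : ∀ x y, lb x y = - lb y x)
    (b : Module.Basis (Fin n) ℝ L) (hb : Orthonormal ℝ ⇑b)
    (α : Fin n → Fin n → Fin n → ℝ)
    (hα : ∀ i j k, α i j k = ⟪lb (b i) (b j), b k⟫)
    (ric : L → L → ℝ)
    (hric : ∀ X Y, ric X Y =
      -(1/2) * ∑ i, ⟪lb X (b i), lb Y (b i)⟫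
      + (1/4) * ∑ i, ∑ j, ⟪lb (b i) (b j), X⟫ * ⟪lb (b i) (b j), Y⟫)
    (κ : Fin n → ℝ)
    (heig : ∀ i j, ric (b i) (b j) = if i = j then κ i else 0)
    -- `t` enumerates the set `Λ` of triples `(i,j,k)` with `i < j` and `α_{ij}^k ≠ 0`
    (t : Fin m → Fin n × Fin n × Fin n)
    (ht : Function.Injective t)
    (htmem : ∀ r, (t r).1 < (t r).2.1 ∧ α (t r).1 (t r).2.1 (t r).2.2 ≠ 0)
    (htsurj : ∀ i j k, i < j → α i j k ≠ 0 → ∃ r, t r = (i, j, k))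
    (Y : Matrix (Fin m) (Fin n) ℝ)
    (hY : ∀ r, Y r = rootVec (t r).1 (t r).2.1 (t r).2.2)
    (U : Matrix (Fin m) (Fin m) ℝ) (hU : U = Y * Y.transpose)
    (αsq : Fin m → ℝ) (hαsq : ∀ r, αsq r = (α (t r).1 (t r).2.1 (t r).2.2)^2)
    (β : ℝ) (D : L →ₗ[ℝ] L)
    (hD : ∀ i, D (b i) = (κ i - β) • b i) :
    (∀ x y, D (lb x y) = lb (D x) y + lb x (D y)) ↔
      U.mulVec αsq = fun _ => -2 * β := by
  classical
  have hbij : ∀ i j : Fin n, ⟪b i, b j⟫ = if i = j then (1:ℝ) else 0 :=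
    orthonormal_iff_ite.mp hb
  have hαskew : ∀ i j k, α j i k = - α i j k := by
    intro i j k; rw [hα, hα, hskew, inner_neg_left]
  have hαdiag : ∀ i k, α i i k = 0 := by
    intro i k; have := hαskew i i k; linarith
  have hαsq_symm : ∀ i j k, (α j i k)^2 = (α i j k)^2 := by
    intro i j k; rw [hαskew, neg_sq]
  have hcoeff : ∀ (c : Fin n → ℝ) (k : Fin n), ⟪∑ l, c l • b l, b k⟫ = c k := by
    intro c k
    rw [sum_inner]
    simp only [real_inner_smul_left, hbij, mul_ite, mul_one, mul_zero]
    rw [Finset.sum_ite_eq']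
    simp
  have hrepr : ∀ (x : L) (k : Fin n), b.repr x k = ⟪x, b k⟫ := by
    intro x k
    conv_rhs => rw [← b.sum_repr x]
    rw [hcoeff]
  have hexp : ∀ i j, lb (b i) (b j) = ∑ k, α i j k • b k := by
    intro i j
    conv_lhs => rw [← b.sum_repr (lb (b i) (b j))]
    exact Finset.sum_congr rfl fun k _ => by rw [hrepr, ← hα]
  have hpar : ∀ x y : L, ⟪x, y⟫ = ∑ k, ⟪x, b k⟫ * ⟪y, b k⟫ := by
    intro x y
    conv_lhs => rw [← b.sum_repr y, inner_sum]
    exact Finset.sum_congr rfl fun k _ => by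
      rw [real_inner_smul_right, hrepr, mul_comm]
  -- the Ricci eigenvalues in terms of structure constants
  have hκ : ∀ l, κ l = -(1/2) * (∑ p, ∑ q, (α l p q)^2)
      + (1/4) * (∑ p, ∑ q, (α p q l)^2) := by
    intro l
    have h1 := heig l l
    rw [if_pos rfl, hric] at h1
    rw [← h1]
    congr 1
    · congr 1
      refine Finset.sum_congr rfl fun p _ => ?_
      rw [hpar]
      refine Finset.sum_congr rfl fun q _ => ?_
      rw [← hα, sq]
    · congr 1
      refine Finset.sum_congr rfl fun p _ => Finset.sum_congr rfl fun q _ => ?_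
      rw [← hα, sq]
  -- the weighted column sums of the root matrix
  have hg : ∀ l, (∑ s : Fin m, Y s l * αsq s) = -2 * κ l := by
    intro l
    have step1 : (∑ s : Fin m, Y s l * αsq s)
        = ∑ p ∈ Finset.univ.filter
            (fun p : Fin n × Fin n × Fin n => p.1 < p.2.1 ∧ α p.1 p.2.1 p.2.2 ≠ 0),
          rootVec p.1 p.2.1 p.2.2 l * (α p.1 p.2.1 p.2.2)^2 := by
      refine Finset.sum_bij (fun r _ => t r) ?_ ?_ ?_ ?_
      · intro r _
        simp only [Finset.mem_filter, Finset.mem_univ, true_and]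
        exact htmem r
      · intro r _ s _ h; exact ht h
      · intro p hp
        simp only [Finset.mem_filter] at hp
        obtain ⟨r, hr⟩ := htsurj p.1 p.2.1 p.2.2 hp.2.1 hp.2.2
        exact ⟨r, Finset.mem_univ r, hr⟩
      · intro r _; rw [hY r, hαsq r]
    have step2 : (∑ p ∈ Finset.univ.filter
            (fun p : Fin n × Fin n × Fin n => p.1 < p.2.1 ∧ α p.1 p.2.1 p.2.2 ≠ 0),
          rootVec p.1 p.2.1 p.2.2 l * (α p.1 p.2.1 p.2.2)^2)
        = ∑ p ∈ Finset.univ.filter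
            (fun p : Fin n × Fin n × Fin n => p.1 < p.2.1),
          rootVec p.1 p.2.1 p.2.2 l * (α p.1 p.2.1 p.2.2)^2 := by
      apply Finset.sum_subset
      · intro p hp
        simp only [Finset.mem_filter] at hp ⊢
        exact ⟨hp.1, hp.2.1⟩
      · intro p hp hnp
        simp only [Finset.mem_filter] at hp hnp
        have hz : α p.1 p.2.1 p.2.2 = 0 := by
          by_contra hc; exact hnp ⟨hp.1, hp.2, hc⟩
        simp [hz]
    rw [step1, step2, Finset.sum_filter]
    simp only [Fintype.sum_prod_type]
    simp only [Finset.sum_ite_irrel, Finset.sum_const_zero]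
    rw [sym_half_aux (fun i j => ∑ k, rootVec i j k l * (α i j k)^2)
      (by
        intro i j
        refine Finset.sum_congr rfl fun k _ => ?_
        rw [hαsq_symm]
        congr 1
        simp only [rootVec]
        ring)
      (by
        intro i
        refine Finset.sum_eq_zero fun k _ => ?_
        rw [hαdiag]
        simp)]
    have expand : ∑ i, ∑ j, ∑ k, rootVec i j k l * (α i j k)^2
        = (∑ j, ∑ k, (α l j k)^2) + (∑ i, ∑ k, (α i l k)^2)
          - ∑ i, ∑ j, (α i j l)^2 := by
      simp only [rootVec, sub_mul, add_mul, ite_mul, one_mul, zero_mul]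
      simp only [Finset.sum_sub_distrib, Finset.sum_add_distrib]
      simp [Finset.sum_ite_irrel, Finset.sum_ite_eq', Finset.sum_const_zero]
    rw [expand]
    have hsw : (∑ i, ∑ k, (α i l k)^2) = ∑ j, ∑ k, (α l j k)^2 := by
      refine Finset.sum_congr rfl fun i _ => Finset.sum_congr rfl fun k _ => ?_
      rw [hαsq_symm]
    rw [hsw, hκ l]
    ring
  -- the mulVec formula
  have hmul : ∀ r, U.mulVec αsq r
      = -2 * (κ (t r).1 + κ (t r).2.1 - κ (t r).2.2) := by
    intro r
    have expand : U.mulVec αsq r = ∑ l, Y r l * (∑ s, Y s l * αsq s) := by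
      rw [hU]
      simp only [Matrix.mulVec, dotProduct, Matrix.mul_apply,
        Matrix.transpose_apply, Finset.sum_mul, Finset.mul_sum, mul_assoc]
      exact Finset.sum_comm
    rw [expand]
    simp only [hg, hY r]
    simp only [rootVec, sub_mul, add_mul, ite_mul, one_mul, zero_mul]
    rw [Finset.sum_sub_distrib, Finset.sum_add_distrib]
    simp only [Finset.sum_ite_eq', Finset.mem_univ, if_true]
    ring
  -- expansion of the derivation condition on basis elements
  have hDlb : ∀ i j, D (lb (b i) (b j)) = ∑ k, (α i j k * (κ k - β)) • b k := by
    intro i j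
    rw [hexp i j, map_sum]
    refine Finset.sum_congr rfl fun k _ => ?_
    rw [map_smul, hD k, smul_smul]
  have hRHS : ∀ i j, lb (D (b i)) (b j) + lb (b i) (D (b j))
      = ∑ k, (α i j k * ((κ i - β) + (κ j - β))) • b k := by
    intro i j
    rw [hD i, hD j, map_smul, map_smul, LinearMap.smul_apply]
    rw [hexp i j, Finset.smul_sum, Finset.smul_sum, ← Finset.sum_add_distrib]
    refine Finset.sum_congr rfl fun k _ => ?_
    rw [smul_smul, smul_smul, ← add_smul]
    congr 1
    ring
  have hcond : (∀ x y, D (lb x y) = lb (D x) y + lb x (D y)) ↔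
      ∀ i j k, α i j k * (κ k - β) = α i j k * ((κ i - β) + (κ j - β)) := by
    constructor
    · intro h i j k
      have h1 := h (b i) (b j)
      rw [hDlb, hRHS] at h1
      have h2 := congrArg (fun x => ⟪x, b k⟫) h1
      simpa only [hcoeff] using h2
    · intro h x y
      have hbb : ∀ i j, D (lb (b i) (b j))
          = lb (D (b i)) (b j) + lb (b i) (D (b j)) := by
        intro i j
        rw [hDlb, hRHS]
        exact Finset.sum_congr rfl fun k _ => by rw [h i j k]
      have heq : lb.compr₂ D = lb.comp D + lb.compl₂ D := by
        apply b.ext; intro i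
        apply b.ext; intro j
        simpa only [LinearMap.compr₂_apply, LinearMap.add_apply,
          LinearMap.compl₂_apply, LinearMap.comp_apply] using hbb i j
      have h3 := LinearMap.congr_fun (LinearMap.congr_fun heq x) y
      simpa only [LinearMap.compr₂_apply, LinearMap.add_apply,
        LinearMap.compl₂_apply, LinearMap.comp_apply] using h3
  rw [hcond]
  constructor
  · intro hC
    funext r
    obtain ⟨hlt, hne⟩ := htmem r
    have h1 := hC (t r).1 (t r).2.1 (t r).2.2
    have h2 := mul_left_cancel₀ hne h1
    show U.mulVec αsq r = -2 * β
    rw [hmul r]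
    linarith
  · intro hU2
    have hkey : ∀ i j k, i < j → α i j k ≠ 0 → κ i + κ j - κ k = β := by
      intro i j k hij hne
      obtain ⟨r, hr⟩ := htsurj i j k hij hne
      have h2 := congrFun hU2 r
      rw [hmul r, hr] at h2
      simp only [] at h2
      linarith
    intro i j k
    rcases lt_trichotomy i j with h | h | h
    · by_cases hz : α i j k = 0
      · simp [hz]
      · have hb1 := hkey i j k h hz
        have hkk : κ k - β = (κ i - β) + (κ j - β) := by linarith
        rw [hkk]
    · subst h; rw [hαdiag]; simp
    · by_cases hz : α i j k = 0
      · simp [hz]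
      · have hz' : α j i k ≠ 0 := by
          rw [hαskew]; exact neg_ne_zero.mpr hz
        have hb1 := hkey j i k h hz'
        have hkk : κ k - β = (κ i - β) + (κ j - β) := by linarith
        rw [hkk]
end

section
/- Let 𝔫 be the (n+1)-dimensional filiform Lie algebra with orthonormal basis {X_0, X_1, ..., X_n} and brackets [X_0, X_i] = a_i X_{i+1} for i = 1,...,n-1, where a_i = √(i(n-i)). Then the endomorphism D = Ric - β·Id with β = -(n-1)n(n+1)/12 - 1 is a derivation of 𝔫, where Ric is the nil-Ricci endomorphism, whose eigenvalues are: -(n-1)n(n+1)/12 on X_0, and -(n+1)/2 + i on X_i for 1 ≤ i ≤ n. -/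
open scoped RealInnerProductSpace

lemma sumId (n : ℕ) : ∑ e ∈ Finset.range n, (e:ℝ) = n*(n-1)/2 := by
  induction n with
  | zero => simp
  | succ m ih => rw [Finset.sum_range_succ, ih]; push_cast; ring

lemma sumEN (n : ℕ) : ∑ e ∈ Finset.range n, (e:ℝ)*((n:ℝ)-e) = ((n:ℝ)-1)*n*(n+1)/6 := by
  induction n with
  | zero => simp
  | succ m ih =>
    have h1 : ∀ e ∈ Finset.range m, (e:ℝ)*((m:ℝ)+1-e) = (e:ℝ)*((m:ℝ)-e) + e := by
      intro e _; ring
    rw [Finset.sum_range_succ]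
    push_cast
    rw [Finset.sum_congr rfl h1, Finset.sum_add_distrib, ih, sumId]
    push_cast; ring

/-- For the filiform nilsoliton metric Lie algebra `L_n` with brackets
`[X_0, X_i] = √(i(n-i)) X_{i+1}`, the map `D = Ric - β·Id` with
`β = -(n-1)n(n+1)/12 - 1` is a derivation, and the nil-Ricci endomorphism has
eigenvalue `-(n-1)n(n+1)/12` on `X_0` and `-(n+1)/2 + i` on `X_i`. -/
theorem stmt19 {L : Type*} [NormedAddCommGroup L] [InnerProductSpace ℝ L]
    [FiniteDimensional ℝ L] {n : ℕ} (hn : 2 ≤ n)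
    (lb : L →ₗ[ℝ] L →ₗ[ℝ] L)
    (hskew : ∀ x y, lb x y = - lb y x)
    (b : Module.Basis (Fin (n+1)) ℝ L) (hb : Orthonormal ℝ ⇑b)
    (X : ℕ → L) (hXb : ∀ i : Fin (n+1), b i = X i.val)
    (hbr : ∀ i : ℕ, 1 ≤ i → i ≤ n - 1 →
      lb (X 0) (X i) = Real.sqrt ((i : ℝ) * ((n : ℝ) - i)) • X (i+1))
    (hzero : ∀ i j : ℕ, i ≤ n → j ≤ n →
      ¬(i = 0 ∧ 1 ≤ j ∧ j ≤ n - 1) → ¬(j = 0 ∧ 1 ≤ i ∧ i ≤ n - 1) →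
      lb (X i) (X j) = 0)
    (ric : L → L → ℝ)
    (hric : ∀ x y, ric x y =
      -(1/2) * ∑ e, ⟪lb x (b e), lb y (b e)⟫
      + (1/4) * ∑ e, ∑ f, ⟪lb (b e) (b f), x⟫ * ⟪lb (b e) (b f), y⟫)
    (κ : ℕ → ℝ)
    (hκ0 : κ 0 = -(((n:ℝ) - 1) * n * (n + 1)) / 12)
    (hκ : ∀ i : ℕ, 1 ≤ i → i ≤ n → κ i = -((n:ℝ) + 1) / 2 + i)
    (β : ℝ) (hβ : β = -(((n:ℝ) - 1) * n * (n + 1)) / 12 - 1)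
    (D : L →ₗ[ℝ] L)
    (hD : ∀ i : Fin (n+1), D (b i) = (κ i.val - β) • b i) :
    (∀ x y, D (lb x y) = lb (D x) y + lb x (D y)) ∧
      ∀ i : Fin (n+1), ∀ w, ric (b i) w = κ i.val * ⟪b i, w⟫ := by
  have hip : ∀ i j : Fin (n+1), ⟪b i, b j⟫ = if i = j then (1:ℝ) else 0 :=
    orthonormal_iff_ite.mp hb
  -- full bracket description
  have hbrA : ∀ e f : Fin (n+1), lb (b e) (b f) =
      if e.val = 0 ∧ 1 ≤ f.val ∧ f.val ≤ n - 1 then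
        Real.sqrt ((f.val:ℝ)*((n:ℝ)-f.val)) • X (f.val+1)
      else if f.val = 0 ∧ 1 ≤ e.val ∧ e.val ≤ n - 1 then
        -(Real.sqrt ((e.val:ℝ)*((n:ℝ)-e.val)) • X (e.val+1))
      else 0 := by
    intro e f
    rw [hXb e, hXb f]
    split_ifs with h1 h2
    · obtain ⟨he, hf1, hf2⟩ := h1
      rw [he]; exact hbr f.val hf1 hf2
    · obtain ⟨hf, he1, he2⟩ := h2
      rw [hf, hskew]; rw [hbr e.val he1 he2]
    · exact hzero e.val f.val (Nat.lt_succ_iff.mp e.2) (Nat.lt_succ_iff.mp f.2) h1 h2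
  have hXf : ∀ (k : ℕ) (h : k < n+1), X k = b ⟨k, h⟩ := fun k h => (hXb ⟨k,h⟩).symm
  have der_basis : ∀ p q : Fin (n+1),
      D (lb (b p) (b q)) = lb (D (b p)) (b q) + lb (b p) (D (b q)) := by
    intro p q
    rw [hD p, hD q]
    simp only [map_smul, LinearMap.smul_apply, map_neg]
    rw [hbrA p q]
    split_ifs with h1 h2
    · obtain ⟨hp, hq1, hq2⟩ := h1
      have hlt : q.val + 1 < n + 1 := by omega
      rw [hXf (q.val+1) hlt, map_smul, hD ⟨q.val+1, hlt⟩]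
      rw [smul_smul, smul_smul, smul_smul, ← add_smul]
      congr 1
      rw [hp, hκ0, hκ q.val hq1 (by omega), hκ (q.val+1) (by omega) (by omega), hβ]
      push_cast
      ring
    · obtain ⟨hq, hp1, hp2⟩ := h2
      have hlt : p.val + 1 < n + 1 := by omega
      rw [hXf (p.val+1) hlt, map_neg, map_smul, hD ⟨p.val+1, hlt⟩]
      rw [smul_smul, smul_neg, smul_neg, smul_smul, smul_smul, ← neg_add, ← add_smul]
      congr 2
      rw [hq, hκ0, hκ p.val hp1 (by omega), hκ (p.val+1) (by omega) (by omega), hβ]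
      push_cast
      ring
    · simp
  have der : ∀ x y, D (lb x y) = lb (D x) y + lb x (D y) := by
    intro x y
    rw [← b.sum_repr x, ← b.sum_repr y]
    simp only [map_sum, LinearMap.sum_apply, map_smul, LinearMap.smul_apply, Finset.smul_sum]
    rw [← Finset.sum_add_distrib]
    refine Finset.sum_congr rfl fun i _ => ?_
    rw [← Finset.sum_add_distrib]
    refine Finset.sum_congr rfl fun j _ => ?_
    rw [der_basis j i, smul_add, smul_add]
  refine ⟨der, ?_⟩
  -- inner product of bracket with X_0 is zero
  have hγz : ∀ (e f g : Fin (n+1)), g.val = 0 → ⟪lb (b e) (b f), b g⟫ = 0 := by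
    intro e f g hg
    rw [hbrA e f]
    split_ifs with h1 h2
    · have hlt : f.val + 1 < n+1 := by omega
      rw [hXf (f.val+1) hlt, real_inner_smul_left, hip,
        if_neg (fun h => by have := congrArg Fin.val h; simp at this; omega), mul_zero]
    · have hlt : e.val + 1 < n+1 := by omega
      rw [hXf (e.val+1) hlt, inner_neg_left, real_inner_smul_left, hip,
        if_neg (fun h => by have := congrArg Fin.val h; simp at this; omega), mul_zero, neg_zero]
    · rw [inner_zero_left]
  have hric_basis : ∀ i j : Fin (n+1), ric (b i) (b j) = κ i.val * ⟪b i, b j⟫ := by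
    intro i j
    rw [hric]
    by_cases hi : i.val = 0
    · have hS2 : ∑ e : Fin (n+1), ∑ f : Fin (n+1),
          ⟪lb (b e) (b f), b i⟫ * ⟪lb (b e) (b f), b j⟫ = 0 :=
        Finset.sum_eq_zero fun e _ => Finset.sum_eq_zero fun f _ => by
          rw [hγz e f i hi, zero_mul]
      by_cases hj : j.val = 0
      · have hij : i = j := Fin.ext (by omega)
        subst hij
        have h1 : ∀ e : Fin (n+1), ⟪lb (b i) (b e), lb (b i) (b e)⟫
            = (e.val:ℝ)*((n:ℝ)-(e.val:ℝ)) := by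
          intro e
          rw [hbrA i e]
          by_cases he : 1 ≤ e.val ∧ e.val ≤ n - 1
          · rw [if_pos ⟨hi, he.1, he.2⟩]
            have hlt : e.val + 1 < n + 1 := by omega
            rw [hXf _ hlt, real_inner_smul_left, real_inner_smul_right, hip, if_pos rfl]
            have hnn : (0:ℝ) ≤ (e.val:ℝ)*((n:ℝ)-(e.val:ℝ)) :=
              mul_nonneg (Nat.cast_nonneg _) (by
                have : (e.val:ℝ) ≤ (n:ℝ) := Nat.cast_le.mpr (by omega)
                linarith)
            rw [mul_one, Real.mul_self_sqrt hnn]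
          · rw [if_neg (fun h => he ⟨h.2.1, h.2.2⟩), if_neg (fun h => by omega)]
            rw [inner_zero_left]
            have : e.val = 0 ∨ e.val = n := by omega
            rcases this with h | h
            · rw [h]; simp
            · rw [h]; ring
        rw [Finset.sum_congr rfl (fun e _ => h1 e), hS2]
        rw [Fin.sum_univ_eq_sum_range (fun k => (k:ℝ)*((n:ℝ)-(k:ℝ))) (n+1)]
        rw [Finset.sum_range_succ, sumEN, hip, if_pos rfl, hi, hκ0]
        push_cast
        ring
      · have hij : i ≠ j := fun h => hj (by rw [← h]; exact hi)
        have hS1 : ∑ e : Fin (n+1), ⟪lb (b i) (b e), lb (b j) (b e)⟫ = 0 :=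
          Finset.sum_eq_zero fun e _ => by
            by_cases he : e.val = 0
            · have : lb (b i) (b e) = 0 := by
                rw [hbrA]; rw [if_neg (by omega), if_neg (by omega)]
              rw [this, inner_zero_left]
            · have : lb (b j) (b e) = 0 := by
                rw [hbrA]; rw [if_neg (by omega), if_neg (by omega)]
              rw [this, inner_zero_right]
        rw [hS1, hS2, hip, if_neg hij]
        ring
    · by_cases hj : j.val = 0
      · -- i ≥ 1, j = 0
        have hij : i ≠ j := fun h => hi (by rw [h]; exact hj)
        have hS1 : ∑ e : Fin (n+1), ⟪lb (b i) (b e), lb (b j) (b e)⟫ = 0 :=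
          Finset.sum_eq_zero fun e _ => by
            by_cases he : e.val = 0
            · have : lb (b j) (b e) = 0 := by
                rw [hbrA, if_neg (by omega), if_neg (by omega)]
              rw [this, inner_zero_right]
            · have : lb (b i) (b e) = 0 := by
                rw [hbrA, if_neg (by omega), if_neg (by omega)]
              rw [this, inner_zero_left]
        have hS2 : ∑ e : Fin (n+1), ∑ f : Fin (n+1),
            ⟪lb (b e) (b f), b i⟫ * ⟪lb (b e) (b f), b j⟫ = 0 :=
          Finset.sum_eq_zero fun e _ => Finset.sum_eq_zero fun f _ => by
            rw [hγz e f j hj, mul_zero]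
        rw [hS1, hS2, hip, if_neg hij]
        ring
      · -- both i, j ≥ 1
        have hi1 : 1 ≤ i.val := by omega
        have hin : i.val ≤ n := by omega
        have hj1 : 1 ≤ j.val := by omega
        have hjn : j.val ≤ n := by omega
        have hS1 : ∑ e : Fin (n+1), ⟪lb (b i) (b e), lb (b j) (b e)⟫ =
            if i = j then (i.val:ℝ)*((n:ℝ)-(i.val:ℝ)) else 0 := by
          have hstep : (∑ e : Fin (n+1), ⟪lb (b i) (b e), lb (b j) (b e)⟫)
              = ⟪lb (b i) (b 0), lb (b j) (b 0)⟫ :=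
            Fintype.sum_eq_single (0 : Fin (n+1)) (fun e he => by
              have he' : e.val ≠ 0 := fun h => he (Fin.ext (by simpa using h))
              have : lb (b i) (b e) = 0 := by
                rw [hbrA, if_neg (by omega), if_neg (by omega)]
              rw [this, inner_zero_left])
          rw [hstep]
          have h0v : (0 : Fin (n+1)).val = 0 := rfl
          by_cases hin' : i.val ≤ n - 1
          · by_cases hjn' : j.val ≤ n - 1
            · rw [hbrA i 0, if_neg (by omega), if_pos ⟨h0v, hi1, hin'⟩,
                  hbrA j 0, if_neg (by omega), if_pos ⟨h0v, hj1, hjn'⟩]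
              have hlti : i.val + 1 < n + 1 := by omega
              have hltj : j.val + 1 < n + 1 := by omega
              rw [hXf _ hlti, hXf _ hltj, inner_neg_neg, real_inner_smul_left,
                  real_inner_smul_right, hip]
              by_cases hij : i = j
              · subst hij
                rw [if_pos rfl, if_pos rfl, mul_one]
                have hnn : (0:ℝ) ≤ (i.val:ℝ)*((n:ℝ)-(i.val:ℝ)) :=
                  mul_nonneg (Nat.cast_nonneg _) (by
                    have : (i.val:ℝ) ≤ (n:ℝ) := Nat.cast_le.mpr hin
                    linarith)
                rw [Real.mul_self_sqrt hnn]
              · rw [if_neg (fun h => hij (Fin.ext (by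
                    have := congrArg Fin.val h; simpa using this))),
                    if_neg hij, mul_zero, mul_zero]
            · have hjv : j.val = n := by omega
              have : lb (b j) (b 0) = 0 := by
                rw [hbrA, if_neg (by omega), if_neg (by omega)]
              rw [this, inner_zero_right,
                  if_neg (fun h => by rw [h] at hin'; omega)]
          · have hiv : i.val = n := by omega
            have : lb (b i) (b 0) = 0 := by
              rw [hbrA, if_neg (by omega), if_neg (by omega)]
            rw [this, inner_zero_left]
            by_cases hij : i = j
            · rw [if_pos hij, hiv]
              ring
            · rw [if_neg hij]
        have hfi : i.val - 1 < n + 1 := by omega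
        have hterm2 : ∀ e f : Fin (n+1),
            ⟪lb (b e) (b f), b i⟫ * ⟪lb (b e) (b f), b j⟫ =
              (if i = j ∧ e = 0 ∧ f = ⟨i.val - 1, hfi⟩ then
                ((i.val:ℝ)-1)*((n:ℝ)-((i.val:ℝ)-1)) else 0)
              + (if i = j ∧ f = 0 ∧ e = ⟨i.val - 1, hfi⟩ then
                ((i.val:ℝ)-1)*((n:ℝ)-((i.val:ℝ)-1)) else 0) := by
          intro e f
          by_cases h1 : e.val = 0 ∧ 1 ≤ f.val ∧ f.val ≤ n - 1
          · rw [hbrA, if_pos h1]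
            have hlt : f.val + 1 < n + 1 := by omega
            rw [hXf _ hlt, real_inner_smul_left, real_inner_smul_left, hip, hip]
            rw [if_neg (fun hc : i = j ∧ f = 0 ∧ e = ⟨i.val - 1, hfi⟩ => by
                have : f.val = 0 := congrArg Fin.val hc.2.1; omega), add_zero]
            have hnnf : (0:ℝ) ≤ (f.val:ℝ)*((n:ℝ)-(f.val:ℝ)) :=
              mul_nonneg (Nat.cast_nonneg _) (by
                have : (f.val:ℝ) ≤ (n:ℝ) := Nat.cast_le.mpr (by omega)
                linarith)
            by_cases hfi' : (⟨f.val+1, hlt⟩ : Fin (n+1)) = i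
            · by_cases hfj' : (⟨f.val+1, hlt⟩ : Fin (n+1)) = j
              · have hijv : i = j := hfi'.symm.trans hfj'
                have hfv : f.val + 1 = i.val := congrArg Fin.val hfi'
                rw [if_pos hfi', if_pos hfj', mul_one]
                rw [Real.mul_self_sqrt hnnf]
                rw [if_pos (show i = j ∧ e = 0 ∧ f = ⟨i.val - 1, hfi⟩ from
                  ⟨hijv, Fin.ext (by show e.val = 0; omega),
                    Fin.ext (by show f.val = i.val - 1; omega)⟩)]
                have hcast : (f.val:ℝ) = (i.val:ℝ) - 1 := by
                  have : ((f.val:ℕ):ℝ) + 1 = ((i.val:ℕ):ℝ) := by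
                    exact_mod_cast congrArg (Nat.cast : ℕ → ℝ) hfv
                  linarith
                rw [hcast]
              · rw [if_pos hfi', if_neg hfj', mul_zero, mul_zero,
                    if_neg (fun hc => hfj' (by
                      have h2 : f.val = i.val - 1 := congrArg Fin.val hc.2.2
                      have h3 : i = j := hc.1
                      exact Fin.ext (by simp; omega)))]
            · rw [if_neg hfi', mul_zero, zero_mul,
                  if_neg (fun hc => hfi' (by
                    have h2 : f.val = i.val - 1 := congrArg Fin.val hc.2.2
                    exact Fin.ext (by simp; omega)))]
          · by_cases h2 : f.val = 0 ∧ 1 ≤ e.val ∧ e.val ≤ n - 1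
            · rw [hbrA, if_neg h1, if_pos h2]
              have hlt : e.val + 1 < n + 1 := by omega
              rw [hXf _ hlt, inner_neg_left, inner_neg_left, real_inner_smul_left,
                  real_inner_smul_left, hip, hip, neg_mul_neg]
              rw [if_neg (fun hc : i = j ∧ e = 0 ∧ f = ⟨i.val - 1, hfi⟩ => by
                  have : e.val = 0 := congrArg Fin.val hc.2.1; omega), zero_add]
              have hnne : (0:ℝ) ≤ (e.val:ℝ)*((n:ℝ)-(e.val:ℝ)) :=
                mul_nonneg (Nat.cast_nonneg _) (by
                  have : (e.val:ℝ) ≤ (n:ℝ) := Nat.cast_le.mpr (by omega)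
                  linarith)
              by_cases hei' : (⟨e.val+1, hlt⟩ : Fin (n+1)) = i
              · by_cases hej' : (⟨e.val+1, hlt⟩ : Fin (n+1)) = j
                · have hijv : i = j := hei'.symm.trans hej'
                  have hev : e.val + 1 = i.val := congrArg Fin.val hei'
                  rw [if_pos hei', if_pos hej', mul_one,
                      Real.mul_self_sqrt hnne]
                  rw [if_pos (show i = j ∧ f = 0 ∧ e = ⟨i.val - 1, hfi⟩ from
                    ⟨hijv, Fin.ext (by show f.val = 0; omega),
                      Fin.ext (by show e.val = i.val - 1; omega)⟩)]
                  have hcast : (e.val:ℝ) = (i.val:ℝ) - 1 := by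
                    have : ((e.val:ℕ):ℝ) + 1 = ((i.val:ℕ):ℝ) := by
                      exact_mod_cast congrArg (Nat.cast : ℕ → ℝ) hev
                    linarith
                  rw [hcast]
                · rw [if_pos hei', if_neg hej', mul_zero, mul_zero,
                      if_neg (fun hc => hej' (by
                        have hh2 : e.val = i.val - 1 := congrArg Fin.val hc.2.2
                        have hh3 : i = j := hc.1
                        exact Fin.ext (by simp; omega)))]
              · rw [if_neg hei', mul_zero, zero_mul,
                    if_neg (fun hc => hei' (by
                      have hh2 : e.val = i.val - 1 := congrArg Fin.val hc.2.2
                      exact Fin.ext (by simp; omega)))]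
            · rw [hbrA, if_neg h1, if_neg h2, inner_zero_left, zero_mul]
              have hA : (if i = j ∧ e = 0 ∧ f = ⟨i.val - 1, hfi⟩ then
                  ((i.val:ℝ)-1)*((n:ℝ)-((i.val:ℝ)-1)) else 0) = 0 := by
                split_ifs with hc
                · obtain ⟨hijv, he0, hfi'⟩ := hc
                  have he0' : e.val = 0 := congrArg Fin.val he0
                  have hf' : f.val = i.val - 1 := congrArg Fin.val hfi'
                  have hone : i.val = 1 := by omega
                  rw [show ((i.val:ℕ):ℝ) = 1 by exact_mod_cast congrArg (Nat.cast : ℕ → ℝ) hone]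
                  ring
                · rfl
              have hB : (if i = j ∧ f = 0 ∧ e = ⟨i.val - 1, hfi⟩ then
                  ((i.val:ℝ)-1)*((n:ℝ)-((i.val:ℝ)-1)) else 0) = 0 := by
                split_ifs with hc
                · obtain ⟨hijv, hf0, hei'⟩ := hc
                  have hf0' : f.val = 0 := congrArg Fin.val hf0
                  have he' : e.val = i.val - 1 := congrArg Fin.val hei'
                  have hone : i.val = 1 := by omega
                  rw [show ((i.val:ℕ):ℝ) = 1 by exact_mod_cast congrArg (Nat.cast : ℕ → ℝ) hone]
                  ring
                · rfl
              rw [hA, hB, add_zero]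
        have hS2 : ∑ e : Fin (n+1), ∑ f : Fin (n+1),
            ⟪lb (b e) (b f), b i⟫ * ⟪lb (b e) (b f), b j⟫ =
            (if i = j then ((i.val:ℝ)-1)*((n:ℝ)-((i.val:ℝ)-1)) else 0)
            + (if i = j then ((i.val:ℝ)-1)*((n:ℝ)-((i.val:ℝ)-1)) else 0) := by
          rw [Finset.sum_congr rfl
            (fun e _ => Finset.sum_congr rfl (fun f _ => hterm2 e f))]
          rw [Finset.sum_congr rfl (fun e _ => Finset.sum_add_distrib),
              Finset.sum_add_distrib]
          congr 1
          · by_cases hij : i = j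
            · simp [hij, ite_and, Finset.sum_ite_eq']
            · simp [hij]
          · by_cases hij : i = j
            · simp [hij, ite_and, Finset.sum_ite_eq']
            · simp [hij]
        rw [hS1, hS2, hip]
        by_cases hij : i = j
        · subst hij
          simp only [eq_self_iff_true, if_true]
          rw [hκ i.val hi1 hin, mul_one]
          ring
        · rw [if_neg hij, if_neg hij, if_neg hij]
          ring
  intro i w
  have hw1 : ∀ (x : L) (e : Fin (n+1)), ⟪x, lb w (b e)⟫
      = ∑ k, b.repr w k * ⟪x, lb (b k) (b e)⟫ := by
    intro x e
    conv_lhs => rw [← b.sum_repr w]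
    simp only [map_sum, LinearMap.sum_apply, map_smul, LinearMap.smul_apply,
      inner_sum, real_inner_smul_right]
  have hw2 : ∀ (y : L), ⟪y, w⟫ = ∑ k, b.repr w k * ⟪y, b k⟫ := by
    intro y
    conv_lhs => rw [← b.sum_repr w]
    simp only [inner_sum, real_inner_smul_right]
  have key1 : ∀ (c : Fin (n+1) → ℝ) (A : Fin (n+1) → Fin (n+1) → ℝ) (r : ℝ),
      r * ∑ e, ∑ k, c k * A e k = ∑ k, c k * (r * ∑ e, A e k) := by
    intro c A r
    rw [Finset.sum_comm, Finset.mul_sum]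
    refine Finset.sum_congr rfl fun k _ => ?_
    conv_lhs => rw [← Finset.mul_sum]
    ring
  have key2 : ∀ (c : Fin (n+1) → ℝ) (B : Fin (n+1) → Fin (n+1) → ℝ)
      (C : Fin (n+1) → Fin (n+1) → Fin (n+1) → ℝ) (r : ℝ),
      r * ∑ e, ∑ f, B e f * ∑ k, c k * C e f k
        = ∑ k, c k * (r * ∑ e, ∑ f, B e f * C e f k) := by
    intro c B C r
    have inner1 : ∀ e f, B e f * ∑ k, c k * C e f k
        = ∑ k, c k * (B e f * C e f k) := by
      intro e f
      rw [Finset.mul_sum]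
      exact Finset.sum_congr rfl fun k _ => by ring
    calc r * ∑ e, ∑ f, B e f * ∑ k, c k * C e f k
        = r * ∑ e, ∑ f, ∑ k, c k * (B e f * C e f k) := by
          rw [Finset.sum_congr rfl fun e _ => Finset.sum_congr rfl fun f _ => inner1 e f]
      _ = r * ∑ e, ∑ k, ∑ f, c k * (B e f * C e f k) := by
          rw [Finset.sum_congr rfl fun e (_ : e ∈ Finset.univ) => Finset.sum_comm]
      _ = r * ∑ k, ∑ e, ∑ f, c k * (B e f * C e f k) := by rw [Finset.sum_comm]
      _ = ∑ k, c k * (r * ∑ e, ∑ f, B e f * C e f k) := by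
          rw [Finset.mul_sum]
          refine Finset.sum_congr rfl fun k _ => ?_
          have h2 : ∀ e : Fin (n+1), ∑ f, c k * (B e f * C e f k)
              = c k * ∑ f, B e f * C e f k := fun e => (Finset.mul_sum _ _ _).symm
          rw [Finset.sum_congr rfl fun e _ => h2 e]
          conv_lhs => rw [← Finset.mul_sum]
          ring
  have expand : ric (b i) w = ∑ k, b.repr w k * ric (b i) (b k) := by
    rw [hric]
    calc -(1/2) * ∑ e, ⟪lb (b i) (b e), lb w (b e)⟫
          + (1/4) * ∑ e, ∑ f, ⟪lb (b e) (b f), b i⟫ * ⟪lb (b e) (b f), w⟫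
        = -(1/2) * ∑ e, ∑ k, b.repr w k * ⟪lb (b i) (b e), lb (b k) (b e)⟫
          + (1/4) * ∑ e, ∑ f, ⟪lb (b e) (b f), b i⟫
            * ∑ k, b.repr w k * ⟪lb (b e) (b f), b k⟫ := by
          rw [Finset.sum_congr rfl fun e (_ : e ∈ Finset.univ) => hw1 (lb (b i) (b e)) e,
              Finset.sum_congr rfl fun e (_ : e ∈ Finset.univ) =>
                Finset.sum_congr rfl fun f _ =>
                  congrArg (fun t => ⟪lb (b e) (b f), b i⟫ * t) (hw2 (lb (b e) (b f)))]
      _ = ∑ k, b.repr w k * ric (b i) (b k) := by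
          rw [key1 (fun k => b.repr w k)
                (fun e k => ⟪lb (b i) (b e), lb (b k) (b e)⟫) (-(1/2)),
              key2 (fun k => b.repr w k)
                (fun e f => ⟪lb (b e) (b f), b i⟫)
                (fun e f k => ⟪lb (b e) (b f), b k⟫) (1/4),
              ← Finset.sum_add_distrib]
          refine Finset.sum_congr rfl fun k _ => ?_
          rw [hric]
          ring
  rw [expand, Finset.sum_congr rfl fun k (_ : k ∈ Finset.univ) => by rw [hric_basis i k],
      hw2 (b i), Finset.mul_sum]
  exact Finset.sum_congr rfl fun k _ => by ring
end
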